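/- Let a, b, c, d be positive reals and k ≥ 2 an integer. Set ε = ((k−1)/k)^{1/k}, and for n ∈ ℕ let m(n) = ⌊nε/(cd) − max(a,b)/c⌋ and D_n = ∏_{j=0}^{m(n)} exp(−((cj+a)d/n)^k) / exp(−((cj+b)d/n)^k). Then lim_{n→∞} D_n = exp(−((k−1)/k)·(a−b)/c). -/

import Mathlib

open Filter Topology Finset Real

/-- **Exercise.** For `k ≥ 2`, with `ε = ((k-1)/k) ^ (1/k)`,
`m n = ⌊n*ε/(c*d) - max a b / c⌋` and
`D n = ∏_{j=0}^{m n} exp(-((c*j+a)*d/n)^k) / exp(-((c*j+b)*d/n)^k)`, one has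
`lim_{n→∞} D n = exp(-((k-1)/k) * (a-b)/c)`. -/
lemma diff_bounds (k : ℕ) (hk : 1 ≤ k) (t : ℝ) (ht : 0 ≤ t) :
    (k:ℝ) * t^(k-1) ≤ (t+1)^k - t^k ∧ (t+1)^k - t^k ≤ (k:ℝ) * (t+1)^(k-1) := by
  have key : (t+1)^k - t^k = ∑ i ∈ Finset.range k, (t+1)^i * t^(k-1-i) := by
    have h := geom_sum₂_mul (t+1) t k
    simp only [add_sub_cancel_left, mul_one] at h
    exact h.symm
  constructor
  · rw [key]
    calc (k:ℝ) * t^(k-1) = ∑ _i ∈ Finset.range k, t^(k-1) := by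
          rw [Finset.sum_const, Finset.card_range, nsmul_eq_mul]
      _ ≤ _ := by
          refine Finset.sum_le_sum fun i hi => ?_
          rw [Finset.mem_range] at hi
          have : t^(k-1) = t^i * t^(k-1-i) := by
            rw [← pow_add]; congr 1; omega
          rw [this]
          exact mul_le_mul_of_nonneg_right
            (pow_le_pow_left₀ ht (by linarith) i) (pow_nonneg ht _)
  · rw [key]
    calc ∑ i ∈ Finset.range k, (t+1)^i * t^(k-1-i)
        ≤ ∑ _i ∈ Finset.range k, (t+1)^(k-1) := by
          refine Finset.sum_le_sum fun i hi => ?_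
          rw [Finset.mem_range] at hi
          have h1 : (t+1)^(k-1) = (t+1)^i * (t+1)^(k-1-i) := by
            rw [← pow_add]; congr 1; omega
          rw [h1]
          exact mul_le_mul_of_nonneg_left
            (pow_le_pow_left₀ ht (by linarith) _) (pow_nonneg (by linarith) _)
      _ = (k:ℝ) * (t+1)^(k-1) := by
          rw [Finset.sum_const, Finset.card_range, nsmul_eq_mul]

lemma sum_pow_bounds (k : ℕ) (hk : 2 ≤ k) (m : ℕ) :
    (m:ℝ)^k ≤ (k:ℝ) * ∑ j ∈ Finset.range (m+1), (j:ℝ)^(k-1) ∧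
    (k:ℝ) * ∑ j ∈ Finset.range (m+1), (j:ℝ)^(k-1) ≤ ((m:ℝ)+1)^k := by
  have hk1 : 1 ≤ k := by omega
  induction m with
  | zero =>
      rw [Finset.sum_range_one]
      norm_num
      rw [zero_pow (by omega : k ≠ 0), zero_pow (by omega : k - 1 ≠ 0)]
      norm_num
  | succ m ih =>
      have hdb := diff_bounds k hk1 (m:ℝ) (by positivity)
      rw [Finset.sum_range_succ]
      push_cast
      constructor
      · nlinarith [ih.1, hdb.2]
      · have hdb2 := diff_bounds k hk1 ((m:ℝ)+1) (by positivity)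
        nlinarith [ih.2, hdb2.1]

lemma sum_pow_le (i m : ℕ) : ∑ j ∈ Finset.range (m+1), (j:ℝ)^i ≤ ((m:ℝ)+1)^(i+1) := by
  calc ∑ j ∈ Finset.range (m+1), (j:ℝ)^i ≤ ∑ _j ∈ Finset.range (m+1), ((m:ℝ)+1)^i := by
        refine Finset.sum_le_sum fun j hj => ?_
        rw [Finset.mem_range] at hj
        have hjm : (j:ℝ) ≤ m := by exact_mod_cast Nat.lt_succ_iff.mp hj
        exact pow_le_pow_left₀ (Nat.cast_nonneg j) (by linarith) i
    _ = ((m:ℝ)+1) * ((m:ℝ)+1)^i := by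
        rw [Finset.sum_const, Finset.card_range, nsmul_eq_mul]; push_cast; ring
    _ = ((m:ℝ)+1)^(i+1) := by rw [pow_succ]; ring


theorem stmt_13 (a b c d : ℝ) (ha : 0 < a) (hb : 0 < b) (hc : 0 < c) (hd : 0 < d)
    (k : ℕ) (hk : 2 ≤ k)
    (ε : ℝ) (hε : ε = (((k : ℝ) - 1) / k) ^ ((1 : ℝ) / k))
    (m : ℕ → ℕ) (hm : ∀ n : ℕ, m n = (⌊(n : ℝ) * ε / (c * d) - max a b / c⌋).toNat)
    (D : ℕ → ℝ)
    (hD : ∀ n : ℕ, D n = ∏ j ∈ Finset.range (m n + 1),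
      Real.exp (-((c * j + a) * d / n) ^ k) / Real.exp (-((c * j + b) * d / n) ^ k)) :
    Tendsto D atTop (𝓝 (Real.exp (-(((k : ℝ) - 1) / k) * ((a - b) / c)))) := by
  have hkR : (2:ℝ) ≤ k := by exact_mod_cast hk
  have hc0' : c ≠ 0 := ne_of_gt hc
  have hd0' : d ≠ 0 := ne_of_gt hd
  have hk0 : (k:ℝ) ≠ 0 := by positivity
  have hx : 0 < ((k:ℝ)-1)/k := by apply div_pos <;> linarith
  have hε0 : 0 < ε := by rw [hε]; exact Real.rpow_pos_of_pos hx _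
  have hεk : ε ^ k = ((k:ℝ)-1)/k := by
    rw [hε, ← Real.rpow_natCast ((((k:ℝ)-1)/k) ^ ((1:ℝ)/k)) k, ← Real.rpow_mul hx.le,
      one_div, inv_mul_cancel₀ hk0, Real.rpow_one]
  set M := max a b with hMdef
  have hM : 0 < M := lt_of_lt_of_le ha (le_max_left _ _)
  set L : ℝ := ε / (c*d) with hLdef
  -- the floor eventually sees a nonnegative argument
  have h0 : ∀ᶠ n : ℕ in atTop, 0 ≤ (n:ℝ) * ε / (c*d) - M/c := by
    have ht : Tendsto (fun n : ℕ => (n:ℝ) * ε / (c*d) - M/c) atTop atTop := by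
      apply tendsto_atTop_add_const_right
      simp only [mul_div_assoc]
      exact Tendsto.atTop_mul_const (by positivity) tendsto_natCast_atTop_atTop
    exact ht.eventually_ge_atTop 0
  have hm_bounds : ∀ᶠ n : ℕ in atTop,
      ((n:ℝ) * ε / (c*d) - M/c - 1) ≤ (m n : ℝ) ∧ (m n : ℝ) ≤ (n:ℝ) * ε / (c*d) - M/c := by
    filter_upwards [h0] with n hn
    have hfl : ((m n : ℕ) : ℝ) = ((⌊(n:ℝ) * ε / (c*d) - M/c⌋ : ℤ) : ℝ) := by
      rw [hm n]
      have h2 := Int.toNat_of_nonneg (Int.floor_nonneg.mpr hn)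
      exact_mod_cast congrArg (Int.cast : ℤ → ℝ) h2
    constructor
    · rw [hfl]; linarith [Int.sub_one_lt_floor ((n:ℝ) * ε / (c*d) - M/c)]
    · rw [hfl]; exact Int.floor_le _
  -- m n / n → L
  have hlow : Tendsto (fun n : ℕ => ((n:ℝ) * ε / (c*d) - M/c - 1)/n) atTop (𝓝 L) := by
    have h1 : Tendsto (fun n : ℕ => L - (M/c + 1)/n) atTop (𝓝 (L - 0)) :=
      tendsto_const_nhds.sub (tendsto_const_nhds.div_atTop tendsto_natCast_atTop_atTop)
    rw [sub_zero] at h1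
    apply Tendsto.congr' _ h1
    filter_upwards [eventually_ge_atTop 1] with n hn
    have hn0 : (n:ℝ) ≠ 0 := by positivity
    rw [hLdef]
    field_simp
    ring
  have hup : Tendsto (fun n : ℕ => ((n:ℝ) * ε / (c*d) - M/c)/n) atTop (𝓝 L) := by
    have h1 : Tendsto (fun n : ℕ => L - (M/c)/n) atTop (𝓝 (L - 0)) :=
      tendsto_const_nhds.sub (tendsto_const_nhds.div_atTop tendsto_natCast_atTop_atTop)
    rw [sub_zero] at h1
    apply Tendsto.congr' _ h1
    filter_upwards [eventually_ge_atTop 1] with n hn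
    have hn0 : (n:ℝ) ≠ 0 := by positivity
    rw [hLdef]
    field_simp
  have hL : Tendsto (fun n : ℕ => (m n : ℝ)/n) atTop (𝓝 L) := by
    refine tendsto_of_tendsto_of_tendsto_of_le_of_le' hlow hup ?_ ?_
    · filter_upwards [hm_bounds, eventually_ge_atTop 1] with n hmn hn
      have hn0 : (0:ℝ) < n := by positivity
      gcongr
      exact hmn.1
    · filter_upwards [hm_bounds, eventually_ge_atTop 1] with n hmn hn
      have hn0 : (0:ℝ) < n := by positivity
      gcongr
      exact hmn.2
  have hL1 : Tendsto (fun n : ℕ => ((m n : ℝ)+1)/n) atTop (𝓝 L) := by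
    have h1 : Tendsto (fun n : ℕ => (m n : ℝ)/n + 1/n) atTop (𝓝 (L + 0)) :=
      hL.add (tendsto_const_nhds.div_atTop tendsto_natCast_atTop_atTop)
    rw [add_zero] at h1
    exact h1.congr fun n => (add_div _ _ _).symm
  -- the normalized power sums
  set S : ℕ → ℕ → ℝ :=
    fun i n => (∑ j ∈ Finset.range (m n + 1), (j:ℝ)^i)/(n:ℝ)^k with hSdef
  have hSk1 : Tendsto (fun n => S (k-1) n) atTop (𝓝 (L^k/k)) := by
    have hlt : Tendsto (fun n : ℕ => ((m n : ℝ)/n)^k/k) atTop (𝓝 (L^k/k)) :=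
      (hL.pow k).div_const k
    have hut : Tendsto (fun n : ℕ => (((m n : ℝ)+1)/n)^k/k) atTop (𝓝 (L^k/k)) :=
      (hL1.pow k).div_const k
    refine tendsto_of_tendsto_of_tendsto_of_le_of_le' hlt hut ?_ ?_
    · filter_upwards [eventually_ge_atTop 1] with n hn
      have hn0 : (0:ℝ) < (n:ℝ)^k := by positivity
      have hbnd := (sum_pow_bounds k hk (m n)).1
      simp only [hSdef]
      rw [div_pow, div_div, div_le_div_iff₀ (by positivity) hn0]
      nlinarith [hn0, hbnd, pow_nonneg (Nat.cast_nonneg (m n) : (0:ℝ) ≤ m n) k]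
    · filter_upwards [eventually_ge_atTop 1] with n hn
      have hn0 : (0:ℝ) < (n:ℝ)^k := by positivity
      have hbnd := (sum_pow_bounds k hk (m n)).2
      simp only [hSdef]
      rw [div_pow, div_div, div_le_div_iff₀ hn0 (by positivity)]
      nlinarith [hn0, hbnd]
  have hS0 : ∀ i, i < k - 1 → Tendsto (fun n => S i n) atTop (𝓝 0) := by
    intro i hi
    have hut : Tendsto (fun n : ℕ => (((m n : ℝ)+1)/n)^(k-1) * (1/n)) atTop (𝓝 (L^(k-1) * 0)) :=
      (hL1.pow (k-1)).mul (tendsto_const_nhds.div_atTop tendsto_natCast_atTop_atTop)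
    rw [mul_zero] at hut
    refine tendsto_of_tendsto_of_tendsto_of_le_of_le' tendsto_const_nhds hut ?_ ?_
    · filter_upwards with n
      have h2 : (0:ℝ) ≤ (∑ j ∈ Finset.range (m n + 1), (j:ℝ)^i)/(n:ℝ)^k := by positivity
      simpa only [hSdef] using h2
    · filter_upwards [eventually_ge_atTop 1] with n hn
      have hn0 : (0:ℝ) < (n:ℝ) := by positivity
      have hnk : (n:ℝ)^(k-1) * n = (n:ℝ)^k := by
        rw [← pow_succ]; congr 1; omega
      have hsum : ∑ j ∈ Finset.range (m n + 1), (j:ℝ)^i ≤ ((m n : ℝ)+1)^(k-1) := by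
        calc ∑ j ∈ Finset.range (m n + 1), (j:ℝ)^i ≤ ((m n : ℝ)+1)^(i+1) := sum_pow_le i (m n)
          _ ≤ ((m n : ℝ)+1)^(k-1) := by
              have h1m : (1:ℝ) ≤ (m n : ℝ)+1 := by
                have := Nat.cast_nonneg (α := ℝ) (m n); linarith
              exact pow_le_pow_right₀ h1m (by omega)
      simp only [hSdef]
      calc (∑ j ∈ Finset.range (m n + 1), (j:ℝ)^i)/(n:ℝ)^k
          ≤ ((m n : ℝ)+1)^(k-1)/(n:ℝ)^k := by gcongr
        _ = (((m n : ℝ)+1)/n)^(k-1) * (1/n) := by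
            rw [div_pow, div_mul_div_comm, mul_one, hnk]
  -- rewrite D as exp of a sum
  set f : ℕ → ℝ :=
    fun n => ∑ j ∈ Finset.range (m n + 1),
      (((c*(j:ℝ)+b)*d/(n:ℝ))^k - ((c*(j:ℝ)+a)*d/(n:ℝ))^k) with hfdef
  have hDf : ∀ n, D n = Real.exp (f n) := by
    intro n
    rw [hD n]
    simp only [← Real.exp_sub, ← Real.exp_sum]
    congr 1
    refine Finset.sum_congr rfl fun j _ => ?_
    ring
  -- binomial decomposition
  have hfS : ∀ n, f n = ∑ i ∈ Finset.range (k+1),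
      ((Nat.choose k i : ℝ) * c^i * (b^(k-i) - a^(k-i)) * d^k) * S i n := by
    intro n
    have key : ∀ (r : ℝ) (j : ℕ), ((c*(j:ℝ)+r)*d/(n:ℝ))^k
        = ∑ i ∈ Finset.range (k+1),
          (c*(j:ℝ))^i * r^(k-i) * (Nat.choose k i : ℝ) * (d^k / (n:ℝ)^k) := by
      intro r j
      rw [div_pow, mul_pow, add_pow, Finset.sum_mul, Finset.sum_div]
      exact Finset.sum_congr rfl fun i _ => by ring
    have step : f n = ∑ j ∈ Finset.range (m n + 1), ∑ i ∈ Finset.range (k+1),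
        ((Nat.choose k i : ℝ) * c^i * (b^(k-i) - a^(k-i)) * d^k) * ((j:ℝ)^i/(n:ℝ)^k) := by
      simp only [hfdef]
      refine Finset.sum_congr rfl fun j _ => ?_
      rw [key b j, key a j, ← Finset.sum_sub_distrib]
      exact Finset.sum_congr rfl fun i _ => by ring
    rw [step, Finset.sum_comm]
    refine Finset.sum_congr rfl fun i _ => ?_
    rw [← Finset.mul_sum]
    congr 1
    simp only [hSdef]
    rw [← Finset.sum_div]
  -- limit of each summand
  set coeff : ℕ → ℝ := fun i => (Nat.choose k i : ℝ) * c^i * (b^(k-i) - a^(k-i)) * d^k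
    with hcoeff
  set ℓ : ℕ → ℝ := fun i => if i = k-1 then coeff (k-1) * (L^k/k) else 0 with hℓ
  have hsum : Tendsto (fun n => ∑ i ∈ Finset.range (k+1), coeff i * S i n) atTop
      (𝓝 (∑ i ∈ Finset.range (k+1), ℓ i)) := by
    refine tendsto_finset_sum _ fun i hi => ?_
    rw [Finset.mem_range] at hi
    rcases eq_or_ne i (k-1) with h1 | h1
    · subst h1
      simp only [hℓ, if_pos rfl]
      exact hSk1.const_mul _
    · rcases eq_or_ne i k with h2 | h2
      · have hc0 : coeff k = 0 := by
          simp only [hcoeff]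
          rw [Nat.sub_self, pow_zero, pow_zero, sub_self, mul_zero, zero_mul]
        rw [h2] at h1 ⊢
        simp only [hℓ, if_neg h1, hc0, zero_mul]
        exact tendsto_const_nhds
      · have hik : i < k - 1 := by omega
        have := (hS0 i hik).const_mul (coeff i)
        rw [mul_zero] at this
        simpa only [hℓ, if_neg h1] using this
  have hsumℓ : ∑ i ∈ Finset.range (k+1), ℓ i = coeff (k-1) * (L^k/k) := by
    simp only [hℓ]
    rw [Finset.sum_ite_eq' (Finset.range (k+1)) (k-1) (fun _ => coeff (k-1) * (L^k/k))]
    simp only [Finset.mem_range, if_pos (by omega : k-1 < k+1)]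
  have hT : coeff (k-1) * (L^k/k) = -(((k:ℝ)-1)/k) * ((a-b)/c) := by
    have hC : (Nat.choose k (k-1) : ℝ) = k := by
      have := Nat.choose_symm (n := k) (k := 1) (by omega)
      rw [this, Nat.choose_one_right]
    have h1 : k - (k-1) = 1 := by omega
    have hck : c^k = c^(k-1) * c := by rw [← pow_succ]; congr 1; omega
    simp only [hcoeff, hC, h1, pow_one]
    rw [hLdef, div_pow, hεk, mul_pow, hck]
    have hc1 : c^(k-1) ≠ 0 := by positivity
    have hdk : d^k ≠ 0 := by positivity
    field_simp
    ring
  have hf_tend : Tendsto f atTop (𝓝 (-(((k:ℝ)-1)/k) * ((a-b)/c))) := by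
    rw [← hT, ← hsumℓ]
    exact Tendsto.congr (fun n => (hfS n).symm) hsum
  have hfinal : Tendsto (fun n => Real.exp (f n)) atTop
      (𝓝 (Real.exp (-(((k:ℝ)-1)/k) * ((a-b)/c)))) :=
    (Real.continuous_exp.tendsto _).comp hf_tend
  exact hfinal.congr fun n => (hDf n).symm
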